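/- Let K be a small category and let F, G : K ⥤ Cat be (strict) functors to the category of categories. Suppose given natural transformations α : F ⟶ G and β : G ⟶ F such that for every object k of K, the functor β_k : G(k) ⥤ F(k) is left adjoint to α_k : F(k) ⥤ G(k), and the adjunctions are compatible with the transition functors. Then the induced functors between the categories of sections (limits) lim F and lim G are adjoint: the functor induced by β is left adjoint to the functor induced by α. -/

import Mathlib

open CategoryTheory CategoryTheory.Limits

universe v

section Aux
open CategoryTheory.Cat.HasLimits

noncomputable section
namespace LimAdjAux
variable {K : Type v} [SmallCategory K]

section Cattools
variable {F : K ⥤ Cat.{v, v}}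

lemma π_id (X : limit (F ⋙ Cat.objects.{v,v})) (j : K) :
    limit.π (homDiagram X X) j (𝟙 X) = 𝟙 _ := by
  show limit.π (homDiagram X X) j (Types.Limit.mk _ (fun _ => 𝟙 _) _) = 𝟙 _
  exact Types.Limit.π_mk _ _ _ _

lemma π_comp {X Y Z : limit (F ⋙ Cat.objects.{v,v})} (f : X ⟶ Y) (g : Y ⟶ Z) (j : K) :
    limit.π (homDiagram X Z) j (f ≫ g) =
      limit.π (homDiagram X Y) j f ≫ limit.π (homDiagram Y Z) j g := by
  show limit.π (homDiagram X Z) j (Types.Limit.mk _ _ _) = _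
  exact Types.Limit.π_mk _ _ _ _

lemma hom_ext {X Y : limit (F ⋙ Cat.objects.{v,v})} {f g : X ⟶ Y}
    (w : ∀ j, limit.π (homDiagram X Y) j f = limit.π (homDiagram X Y) j g) : f = g :=
  Types.limit_ext _ _ _ w

lemma homDiagram_map_apply' {X Y : limit (F ⋙ Cat.objects.{v,v})} {j j' : K} (m : j ⟶ j')
    (g : (homDiagram X Y).obj j) :
    (homDiagram X Y).map m g = eqToHom (show limit.π (F ⋙ Cat.objects) j' X =
        (F.map m).toFunctor.obj (limit.π (F ⋙ Cat.objects) j X) from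
          (limit.w_apply (F ⋙ Cat.objects) m X).symm) ≫
      (F.map m).toFunctor.map g ≫ eqToHom (show (F.map m).toFunctor.obj (limit.π (F ⋙ Cat.objects) j Y) =
        limit.π (F ⋙ Cat.objects) j' Y from limit.w_apply (F ⋙ Cat.objects) m Y) := rfl

lemma homDiagram_map_apply'' {X Y : limit (F ⋙ Cat.objects.{v,v})} {j j' : K} (m : j ⟶ j')
    (g : limit.π (F ⋙ Cat.objects) j X ⟶ limit.π (F ⋙ Cat.objects) j Y) :
    (homDiagram X Y).map m g = eqToHom (show limit.π (F ⋙ Cat.objects) j' X =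
        (F.map m).toFunctor.obj (limit.π (F ⋙ Cat.objects) j X) from
          (limit.w_apply (F ⋙ Cat.objects) m X).symm) ≫
      (F.map m).toFunctor.map g ≫ eqToHom (show (F.map m).toFunctor.obj (limit.π (F ⋙ Cat.objects) j Y) =
        limit.π (F ⋙ Cat.objects) j' Y from limit.w_apply (F ⋙ Cat.objects) m Y) := rfl
end Cattools

@[simp] lemma eqToHom_hom_app {C D : Cat.{v,v}} {P Q : C ⟶ D} (h : P = Q) (x : C) :
    (eqToHom h).toNatTrans.app x = eqToHom (Functor.congr_obj (congrArg Cat.Hom.toFunctor h) x) := by subst h; rfl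

lemma app_eqToHom' {C D : Type*} [Category C] [Category D] {P Q : C ⥤ D} (t : P ⟶ Q) {x y : C}
    (w : x = y) :
    t.app x = eqToHom (congrArg P.obj w) ≫ t.app y ≫ eqToHom (congrArg Q.obj w).symm := by
  subst w; simp

lemma sq_aux {A A' B B' : Type*} [Category A] [Category A'] [Category B] [Category B']
    (P : A ⥤ A') (Q : B ⥤ B') (b : A ⥤ B) (b' : A' ⥤ B') (h : P ⋙ b' = b ⋙ Q)
    {x y : A} {x' y' : A'} {u v : B} {u' v' : B'} {a : x ⟶ y}
    {e1 : u = b.obj x} {e2 : b.obj y = v} {eu : u' = Q.obj u} {ev : Q.obj v = v'}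
    {ex : x' = P.obj x} {ey : P.obj y = y'} {e3 : u' = b'.obj x'} {e4 : b'.obj y' = v'} :
    eqToHom eu ≫ Q.map (eqToHom e1 ≫ b.map a ≫ eqToHom e2) ≫ eqToHom ev =
      eqToHom e3 ≫ b'.map (eqToHom ex ≫ P.map a ≫ eqToHom ey) ≫ eqToHom e4 := by
  subst ex ey e3 e4 e1 e2
  have hn := Functor.congr_hom h a
  simp only [Functor.comp_map] at hn
  simp [hn]

lemma id_aux {C : Type*} [Category C] {a b : C} {p : a = b} {q : b = a} :
    eqToHom p ≫ 𝟙 b ≫ eqToHom q = 𝟙 a := by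
  subst p; simp

lemma comp_aux {C : Type*} [Category C] {a a' b b' c c' : C} {A : a' ⟶ b'} {B : b' ⟶ c'}
    {p : a = a'} {r : b' = b} {s : b = b'} {q : c' = c} :
    eqToHom p ≫ (A ≫ B) ≫ eqToHom q = (eqToHom p ≫ A ≫ eqToHom r) ≫ eqToHom s ≫ B ≫ eqToHom q := by
  subst r; simp

lemma mapcomp_aux {C D : Type*} [Category C] [Category D] {P : C ⥤ D} {x y y' : C}
    {a c d b : D} {m0 : x ⟶ y} {e1 : y = y'} {e0 : a = P.obj x} {e2 : P.obj y' = b}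
    {N : P.obj x ⟶ c} {h' : c = P.obj y} {M : a ⟶ d} {f1 : P.obj x = a} {f2 : d = c}
    {e3 : d = b} (hc : P.map m0 = N ≫ eqToHom h') (ha : N = eqToHom f1 ≫ M ≫ eqToHom f2) :
    eqToHom e0 ≫ P.map (m0 ≫ eqToHom e1) ≫ eqToHom e2 = M ≫ eqToHom e3 := by
  rw [Functor.map_comp, eqToHom_map, hc, ha]; simp

lemma mapcomp_aux' {C D : Type*} [Category C] [Category D] {Q : C ⥤ D} {y y' d0 : C}
    {a b c c0 : D} {m0 : y ⟶ d0} {e1 : y' = y} {e0 : a = Q.obj y'} {e2 : Q.obj d0 = b}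
    {M : c ⟶ b} {e3 : a = c} {h : Q.obj y = c0} {f1 : c0 = c} {f2 : b = Q.obj d0}
    (hc : eqToHom h ≫ (eqToHom f1 ≫ M ≫ eqToHom f2) = Q.map m0) :
    eqToHom e0 ≫ Q.map (eqToHom e1 ≫ m0) ≫ eqToHom e2 = eqToHom e3 ≫ M := by
  rw [Functor.map_comp, eqToHom_map, ← hc]; simp

lemma unit_nat_aux {A B : Type*} [Category A] [Category B] {b : A ⥤ B} {a : B ⥤ A} (adj : b ⊣ a)
    {x y : A} {g : x ⟶ y} {X' Y' : A} {u v : B} {e1 : a.obj (b.obj y) = Y'}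
    {e2 : a.obj (b.obj x) = X'} {e3 : X' = a.obj u} {e4 : u = b.obj x} {e5 : b.obj y = v}
    {e6 : a.obj v = Y'} :
    g ≫ adj.unit.app y ≫ eqToHom e1 =
      (adj.unit.app x ≫ eqToHom e2) ≫ eqToHom e3 ≫ a.map (eqToHom e4 ≫ b.map g ≫ eqToHom e5) ≫
        eqToHom e6 := by
  subst e4 e5 e2 e6; simp

lemma counit_nat_aux {A B : Type*} [Category A] [Category B] {b : A ⥤ B} {a : B ⥤ A} (adj : b ⊣ a)
    {x y : B} {g : x ⟶ y} {X'' Y'' : B} {u : A} {v : A} {e1 : X'' = b.obj u}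
    {e2 : u = a.obj x} {e3 : a.obj y = v} {e4 : b.obj v = Y''} {e5 : Y'' = b.obj (a.obj y)}
    {e6 : X'' = b.obj (a.obj x)} :
    (eqToHom e1 ≫ b.map (eqToHom e2 ≫ a.map g ≫ eqToHom e3) ≫ eqToHom e4) ≫
      (eqToHom e5 ≫ adj.counit.app y) = (eqToHom e6 ≫ adj.counit.app x) ≫ g := by
  subst e2 e3 e1 e4; simp

lemma left_tri_aux {A B : Type*} [Category A] [Category B] {b : A ⥤ B} {a : B ⥤ A} (adj : b ⊣ a)
    {x : A} {z W'' : B} {W : A} {e1 : z = b.obj x} {e2 : a.obj (b.obj x) = W} {e3 : b.obj W = W''}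
    {e4 : W'' = b.obj (a.obj z)} :
    (eqToHom e1 ≫ b.map (adj.unit.app x ≫ eqToHom e2) ≫ eqToHom e3) ≫
      (eqToHom e4 ≫ adj.counit.app z) = 𝟙 z := by
  subst e2 e3 e1; simp

lemma right_tri_aux {A B : Type*} [Category A] [Category B] {b : A ⥤ B} {a : B ⥤ A} (adj : b ⊣ a)
    {x V : B} {y W : A} {e1 : a.obj (b.obj y) = W} {e2 : W = a.obj V} {e3 : V = b.obj (a.obj x)}
    {e4 : a.obj x = y} :
    (adj.unit.app y ≫ eqToHom e1) ≫ (eqToHom e2 ≫ a.map (eqToHom e3 ≫ adj.counit.app x) ≫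
      eqToHom e4) = 𝟙 y := by
  subst e4 e1 e3; simp

section Sect
variable {F G : K ⥤ Cat.{v, v}} (β : G ⟶ F)

def sectObj (X : limit (G ⋙ Cat.objects.{v,v})) : limit (F ⋙ Cat.objects.{v,v}) :=
  Types.Limit.mk _ (fun j => (β.app j).toFunctor.obj (limit.π (G ⋙ Cat.objects) j X)) (by
    intro j j' m
    have h1 := limit.w_apply (G ⋙ Cat.objects) m X
    have h2 := Functor.congr_obj (congrArg Cat.Hom.toFunctor (β.naturality m)) (limit.π (G ⋙ Cat.objects) j X)
    dsimp at h1 h2 ⊢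
    exact h2.symm.trans (congrArg (β.app j').toFunctor.obj h1))

lemma sectObj_π (X : limit (G ⋙ Cat.objects.{v,v})) (j : K) :
    limit.π (F ⋙ Cat.objects) j (sectObj β X) = (β.app j).toFunctor.obj (limit.π (G ⋙ Cat.objects) j X) :=
  Types.Limit.π_mk _ _ _ _

def sectMap {X Y : limit (G ⋙ Cat.objects.{v,v})} (f : X ⟶ Y) :
    sectObj β X ⟶ sectObj β Y :=
  Types.Limit.mk _ (fun j => eqToHom (sectObj_π β X j) ≫
      (β.app j).toFunctor.map (limit.π (homDiagram X Y) j f) ≫ eqToHom (sectObj_π β Y j).symm) (by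
    intro j j' m
    have hw := limit.w_apply (homDiagram X Y) m f
    have hn := Functor.congr_hom (congrArg Cat.Hom.toFunctor (β.naturality m)) (limit.π (homDiagram X Y) j f)
    simp only [homDiagram_map_apply', homDiagram_map_apply''] at hw ⊢
    dsimp at hw hn ⊢
    rw [← hw]
    exact sq_aux (G.map m).toFunctor (F.map m).toFunctor (β.app j).toFunctor (β.app j').toFunctor
      (congrArg Cat.Hom.toFunctor (β.naturality m)))

lemma sectMap_π {X Y : limit (G ⋙ Cat.objects.{v,v})} (f : X ⟶ Y) (j : K) :
    limit.π (homDiagram (sectObj β X) (sectObj β Y)) j (sectMap β f) =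
      eqToHom (sectObj_π β X j) ≫ (β.app j).toFunctor.map (limit.π (homDiagram X Y) j f) ≫
        eqToHom (sectObj_π β Y j).symm :=
  Types.Limit.π_mk _ _ _ _

@[simps] def sect : (limitConeX G : Cat) ⥤ (limitConeX F : Cat) where
  obj := sectObj β
  map := sectMap β
  map_id X := by
    apply hom_ext; intro j
    erw [sectMap_π, π_id, π_id, CategoryTheory.Functor.map_id]
    exact id_aux
  map_comp f g := by
    apply hom_ext; intro j
    erw [sectMap_π, π_comp, π_comp, sectMap_π, sectMap_π, Functor.map_comp]
    exact comp_aux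

lemma sect_comm (j : K) :
    ((Cat.Hom.ofFunctor (sect β) : (limitConeX G : Cat) ⟶ limitConeX F) ≫ (limitCone F).π.app j : (limitConeX G : Cat) ⟶ F.obj j) =
      (limitCone G).π.app j ≫ β.app j := by
  apply Cat.Hom.ext
  fapply CategoryTheory.Functor.ext
  · intro X
    exact sectObj_π β X j
  · intro X Y f
    exact sectMap_π β f j

def limIso (F : K ⥤ Cat.{v,v}) : (limit F : Cat) ≅ limitConeX F :=
  limit.isoLimitCone ⟨limitCone F, limitConeIsLimit F⟩

lemma limMap_eq : (limMap β : (limit G : Cat) ⟶ limit F) =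
    (limIso G).hom ≫ (Cat.Hom.ofFunctor (sect β) : (limitConeX G : Cat) ⟶ limitConeX F) ≫ (limIso F).inv := by
  apply limit.hom_ext
  intro j
  rw [limMap_π]
  have h1 : (limIso F).inv ≫ limit.π F j = (limitCone F).π.app j := by
    exact limit.isoLimitCone_inv_π _ j
  have h2 : (limIso G).hom ≫ (limitCone G).π.app j = limit.π G j :=
    limit.isoLimitCone_hom_π _ j
  rw [Category.assoc, Category.assoc, h1, sect_comm]
  erw [← Category.assoc, h2]

end Sect

section Adj
variable {F G : K ⥤ Cat.{v, v}} {α : F ⟶ G} {β : G ⟶ F}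
  (adj : ∀ k : K, ((β.app k).toFunctor : (G.obj k : Cat) ⥤ F.obj k) ⊣ ((α.app k).toFunctor : (F.obj k : Cat) ⥤ G.obj k))
  (compat : ∀ {k l : K} (m : k ⟶ l),
      mateEquiv (adj k) (adj l)
          (eqToHom (show ((G.map m).toFunctor ⋙ (β.app l).toFunctor : (G.obj k : Cat) ⥤ F.obj l)
              = (β.app k).toFunctor ⋙ (F.map m).toFunctor from congrArg Cat.Hom.toFunctor (β.naturality m)))
        = eqToHom (show ((α.app k).toFunctor ⋙ (G.map m).toFunctor : (F.obj k : Cat) ⥤ G.obj l)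
              = (F.map m).toFunctor ⋙ (α.app l).toFunctor from congrArg Cat.Hom.toFunctor (α.naturality m).symm))

include compat in
lemma unit_compat {k l : K} (m : k ⟶ l) (c : (G.obj k : Cat))
    (h : (G.map m).toFunctor.obj ((α.app k).toFunctor.obj ((β.app k).toFunctor.obj c)) =
      (α.app l).toFunctor.obj ((β.app l).toFunctor.obj ((G.map m).toFunctor.obj c))) :
    (G.map m).toFunctor.map ((adj k).unit.app c) ≫ eqToHom h = (adj l).unit.app ((G.map m).toFunctor.obj c) := by
  have H := unit_mateEquiv (adj k) (adj l)
    (eqToHom (show ((G.map m).toFunctor ⋙ (β.app l).toFunctor : (G.obj k : Cat) ⥤ F.obj l)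
              = (β.app k).toFunctor ⋙ (F.map m).toFunctor from congrArg Cat.Hom.toFunctor (β.naturality m))) c
  rw [compat m] at H
  simp only [eqToHom_hom_app, eqToHom_app, eqToHom_map] at H
  rw [comp_eqToHom_iff] at H ⊢
  rw [H]
  simp

include compat in
lemma counit_compat {k l : K} (m : k ⟶ l) (d : (F.obj k : Cat))
    (h : (F.map m).toFunctor.obj ((β.app k).toFunctor.obj ((α.app k).toFunctor.obj d)) =
      (β.app l).toFunctor.obj ((α.app l).toFunctor.obj ((F.map m).toFunctor.obj d))) :
    eqToHom h ≫ (adj l).counit.app ((F.map m).toFunctor.obj d) = (F.map m).toFunctor.map ((adj k).counit.app d) := by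
  have H := mateEquiv_counit (adj k) (adj l)
    (eqToHom (show ((G.map m).toFunctor ⋙ (β.app l).toFunctor : (G.obj k : Cat) ⥤ F.obj l)
              = (β.app k).toFunctor ⋙ (F.map m).toFunctor from congrArg Cat.Hom.toFunctor (β.naturality m))) d
  rw [compat m] at H
  simp only [eqToHom_hom_app, eqToHom_app, eqToHom_map] at H
  rw [eqToHom_comp_iff] at H ⊢
  rw [H]
  simp

lemma unitApp_e (X : limit (G ⋙ Cat.objects.{v,v})) (j : K) :
    limit.π (G ⋙ Cat.objects) j (sectObj α (sectObj β X)) =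
      (α.app j).toFunctor.obj ((β.app j).toFunctor.obj (limit.π (G ⋙ Cat.objects) j X)) :=
  (sectObj_π α (sectObj β X) j).trans (congrArg (α.app j).toFunctor.obj (sectObj_π β X j))

include compat in
def limUnitApp (X : limit (G ⋙ Cat.objects.{v,v})) :
    X ⟶ sectObj α (sectObj β X) :=
  Types.Limit.mk _ (fun j => (adj j).unit.app (limit.π (G ⋙ Cat.objects) j X) ≫
      eqToHom (unitApp_e X j).symm) (by
    intro j j' m
    have hx : (G.map m).toFunctor.obj (limit.π (G ⋙ Cat.objects) j X) =
        limit.π (G ⋙ Cat.objects) j' X := limit.w_apply (G ⋙ Cat.objects) m X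
    have h : (G.map m).toFunctor.obj ((α.app j).toFunctor.obj ((β.app j).toFunctor.obj (limit.π (G ⋙ Cat.objects) j X))) =
        (α.app j').toFunctor.obj ((β.app j').toFunctor.obj ((G.map m).toFunctor.obj (limit.π (G ⋙ Cat.objects) j X))) := by
      have h1 := Functor.congr_obj (congrArg Cat.Hom.toFunctor (α.naturality m)) ((β.app j).toFunctor.obj (limit.π (G ⋙ Cat.objects) j X))
      have h2 := Functor.congr_obj (congrArg Cat.Hom.toFunctor (β.naturality m)) (limit.π (G ⋙ Cat.objects) j X)
      dsimp at h1 h2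
      exact h1.symm.trans (congrArg (α.app j').toFunctor.obj h2.symm)
    have hc := unit_compat adj compat m (limit.π (G ⋙ Cat.objects) j X) h
    rw [comp_eqToHom_iff] at hc
    have ha := app_eqToHom' (adj j').unit hx
    simp only [homDiagram_map_apply', homDiagram_map_apply''] at ha ⊢
    dsimp at ha ⊢
    exact mapcomp_aux hc ha)

lemma limUnitApp_π (X : limit (G ⋙ Cat.objects.{v,v})) (j : K) :
    limit.π (homDiagram X (sectObj α (sectObj β X))) j (limUnitApp adj compat X) =
      (adj j).unit.app (limit.π (G ⋙ Cat.objects) j X) ≫ eqToHom (unitApp_e X j).symm :=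
  Types.Limit.π_mk _ _ _ _

lemma counitApp_e (X : limit (F ⋙ Cat.objects.{v,v})) (j : K) :
    limit.π (F ⋙ Cat.objects) j (sectObj β (sectObj α X)) =
      (β.app j).toFunctor.obj ((α.app j).toFunctor.obj (limit.π (F ⋙ Cat.objects) j X)) :=
  (sectObj_π β (sectObj α X) j).trans (congrArg (β.app j).toFunctor.obj (sectObj_π α X j))

include compat in
def limCounitApp (X : limit (F ⋙ Cat.objects.{v,v})) :
    sectObj β (sectObj α X) ⟶ X :=
  Types.Limit.mk _ (fun j => eqToHom (counitApp_e X j) ≫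
      (adj j).counit.app (limit.π (F ⋙ Cat.objects) j X)) (by
    intro j j' m
    have hx : (F.map m).toFunctor.obj (limit.π (F ⋙ Cat.objects) j X) =
        limit.π (F ⋙ Cat.objects) j' X := limit.w_apply (F ⋙ Cat.objects) m X
    have h : (F.map m).toFunctor.obj ((β.app j).toFunctor.obj ((α.app j).toFunctor.obj (limit.π (F ⋙ Cat.objects) j X))) =
        (β.app j').toFunctor.obj ((α.app j').toFunctor.obj ((F.map m).toFunctor.obj (limit.π (F ⋙ Cat.objects) j X))) := by
      have h1 := Functor.congr_obj (congrArg Cat.Hom.toFunctor (β.naturality m)) ((α.app j).toFunctor.obj (limit.π (F ⋙ Cat.objects) j X))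
      have h2 := Functor.congr_obj (congrArg Cat.Hom.toFunctor (α.naturality m)) (limit.π (F ⋙ Cat.objects) j X)
      dsimp at h1 h2
      exact h1.symm.trans (congrArg (β.app j').toFunctor.obj h2.symm)
    have hc := counit_compat adj compat m (limit.π (F ⋙ Cat.objects) j X) h
    have ha := app_eqToHom' (adj j').counit hx
    rw [ha] at hc
    simp only [homDiagram_map_apply', homDiagram_map_apply''] at hc ⊢
    dsimp at hc ⊢
    exact mapcomp_aux' hc)

lemma limCounitApp_π (X : limit (F ⋙ Cat.objects.{v,v})) (j : K) :
    limit.π (homDiagram (sectObj β (sectObj α X)) X) j (limCounitApp adj compat X) =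
      eqToHom (counitApp_e X j) ≫ (adj j).counit.app (limit.π (F ⋙ Cat.objects) j X) :=
  Types.Limit.π_mk _ _ _ _

set_option maxHeartbeats 1600000 in
def sectAdj : (sect β : (limitConeX G : Cat) ⥤ (limitConeX F : Cat)) ⊣ sect α where
  unit :=
  { app := limUnitApp adj compat
    naturality := by
      intro X Y f
      apply hom_ext; intro j
      dsimp only [Functor.id_obj, Functor.id_map, Functor.comp_obj, Functor.comp_map, sect_obj, sect_map]
      erw [π_comp, π_comp, limUnitApp_π, limUnitApp_π]
      show limit.π (homDiagram X Y) j f ≫ _ = _ ≫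
        limit.π (homDiagram _ _) j (sectMap α (sectMap β f))
      erw [sectMap_π, sectMap_π]
      exact unit_nat_aux (adj j) }
  counit :=
  { app := limCounitApp adj compat
    naturality := by
      intro X Y f
      apply hom_ext; intro j
      dsimp only [Functor.id_obj, Functor.id_map, Functor.comp_obj, Functor.comp_map, sect_obj, sect_map]
      erw [π_comp, π_comp, limCounitApp_π, limCounitApp_π]
      show limit.π (homDiagram _ _) j (sectMap β (sectMap α f)) ≫ _ = _
      erw [sectMap_π, sectMap_π]
      exact counit_nat_aux (adj j) }
  left_triangle_components := by
    intro X
    apply hom_ext; intro j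
    dsimp only [Functor.id_obj, Functor.comp_obj, sect_obj, sect_map]
    erw [π_comp, π_id]
    show limit.π (homDiagram _ _) j (sectMap β (limUnitApp adj compat X)) ≫ _ = _
    erw [sectMap_π, limUnitApp_π, limCounitApp_π]
    exact left_tri_aux (adj j)
  right_triangle_components := by
    intro X
    apply hom_ext; intro j
    dsimp only [Functor.id_obj, Functor.comp_obj, sect_obj, sect_map]
    erw [π_comp, π_id]
    show limit.π (homDiagram _ _) j (limUnitApp adj compat (sectObj α X)) ≫
      limit.π (homDiagram _ _) j (sectMap α (limCounitApp adj compat X)) = _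
    erw [limUnitApp_π, sectMap_π, limCounitApp_π]
    exact right_tri_aux (adj j)

end Adj
end LimAdjAux
end
end Aux

open LimAdjAux CategoryTheory.Cat.HasLimits in
/-- Let `K` be a small category, `F G : K ⥤ Cat`, and `α : F ⟶ G`, `β : G ⟶ F`
natural transformations such that for every `k`, `β.app k` is left adjoint to
`α.app k`, compatibly with the transition functors (the mate squares commute).
Then the induced functor `lim G ⥤ lim F` is left adjoint to the induced functor
`lim F ⥤ lim G`. -/
theorem limit_pointwise_adjunction {K : Type v} [SmallCategory K]
    (F G : K ⥤ Cat.{v, v}) (α : F ⟶ G) (β : G ⟶ F)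
    (adj : ∀ k : K, ((β.app k).toFunctor : (G.obj k : Cat) ⥤ F.obj k) ⊣ ((α.app k).toFunctor : (F.obj k : Cat) ⥤ G.obj k))
    (compat : ∀ {k l : K} (m : k ⟶ l),
      mateEquiv (adj k) (adj l)
          (eqToHom (show ((G.map m).toFunctor ⋙ (β.app l).toFunctor : (G.obj k : Cat) ⥤ F.obj l)
              = (β.app k).toFunctor ⋙ (F.map m).toFunctor from congrArg Cat.Hom.toFunctor (β.naturality m)))
        = eqToHom (show ((α.app k).toFunctor ⋙ (G.map m).toFunctor : (F.obj k : Cat) ⥤ G.obj l)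
              = (F.map m).toFunctor ⋙ (α.app l).toFunctor from congrArg Cat.Hom.toFunctor (α.naturality m).symm)) :
    Nonempty (((limMap β).toFunctor : (limit G : Cat) ⥤ (limit F : Cat)) ⊣
      ((limMap α).toFunctor : (limit F : Cat) ⥤ (limit G : Cat))) := by
  let eG := Cat.equivOfIso (limIso G)
  let eF := Cat.equivOfIso (limIso F)
  let T2 := (eG.toAdjunction.comp (sectAdj adj compat)).comp eF.symm.toAdjunction
  have hL : (((limIso G).hom.toFunctor ⋙ sect β) ⋙ (limIso F).inv.toFunctor : (limit G : Cat) ⥤ (limit F : Cat))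
      = (limMap β).toFunctor := by
    rw [LimAdjAux.limMap_eq β]; rfl
  have hR : ((limIso F).hom.toFunctor ⋙ (sect α ⋙ (limIso G).inv.toFunctor) : (limit F : Cat) ⥤ (limit G : Cat))
      = (limMap α).toFunctor := by
    rw [LimAdjAux.limMap_eq α]; rfl
  exact ⟨(T2.ofNatIsoLeft (eqToIso hL)).ofNatIsoRight (eqToIso hR)⟩
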